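/- Let k ≥ 2 be an integer and z ∈ ℂ nonzero. Define t by t_0 = 1, t_k = z, and t_j = 0 for all other j ≥ 1, and assume 1 + C(n,k)·z ≠ 0 for all n. Then ζ_n^a = (1 + C(n,k)·|z|)/|1 + C(n,k)·z| − 1 and the series Σ_{n≥1} ζ_n^a converges (hence the associated ℂSG measure is of bounded variation). -/

import Mathlib

open MeasureTheory Filter Finset

attribute [local instance] Classical.propDecidable

noncomputable section

/-- A relation on ℕ representing a naturally labelled past-finite causal set:
a strict partial order `r` with `r i j → i < j`. -/
def CausalRel (r : ℕ → ℕ → Prop) : Prop :=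
  (∀ i, ¬ r i i) ∧ (∀ i j k, r i j → r j k → r i k) ∧ (∀ i j, r i j → i < j)

/-- Ω, the sample space of naturally labelled past-finite causal sets. -/
def Omega : Type := {r : ℕ → ℕ → Prop // CausalRel r}

/-- An `n`-node: a strict partial order on `Fin n` compatible with the labelling. -/
def IsNode {n : ℕ} (p : Fin n → Fin n → Prop) : Prop :=
  (∀ i, ¬ p i i) ∧ (∀ i j k, p i j → p j k → p i k) ∧
    (∀ i j : Fin n, p i j → (i : ℕ) < (j : ℕ))

/-- The cylinder set of an `n`-node. -/
def Cyl {n : ℕ} (p : Fin n → Fin n → Prop) : Set Omega :=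
  {r | ∀ i j : Fin n, r.1 i.1 j.1 ↔ p i j}

/-- The Boolean set algebra 𝔜 generated by the cylinder sets (and Ω itself) under
finite unions, intersections and complements. -/
inductive InAlg : Set Omega → Prop
  | basic {n : ℕ} (hn : 1 ≤ n) (p : Fin n → Fin n → Prop) (hp : IsNode p) : InAlg (Cyl p)
  | univ : InAlg Set.univ
  | compl (s : Set Omega) : InAlg s → InAlg sᶜ
  | union (s t : Set Omega) : InAlg s → InAlg t → InAlg (s ∪ t)

/-- Finite additivity of a complex set function on the algebra 𝔜. -/
def FinitelyAdditive (μ : Set Omega → ℂ) : Prop :=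
  ∀ s t : Set Omega, InAlg s → InAlg t → Disjoint s t → μ (s ∪ t) = μ s + μ t

/-- A finite partition of Ω into pairwise disjoint members of 𝔜. -/
def IsPartition (π : Finset (Set Omega)) : Prop :=
  (∀ s ∈ π, InAlg s) ∧ ((↑π : Set (Set Omega)).Pairwise Disjoint) ∧
    ⋃₀ (↑π : Set (Set Omega)) = Set.univ

/-- Bounded variation: the sums Σᵢ |μ(αᵢ)| over finite partitions of Ω into members
of 𝔜 are uniformly bounded. -/
def BoundedVariation (μ : Set Omega → ℂ) : Prop :=
  ∃ M : ℝ, ∀ π : Finset (Set Omega), IsPartition π → ∑ s ∈ π, ‖μ s‖ ≤ M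

/-- λ(a,b) = Σ_{k=b}^{a} C(a−b, k−b)·t_k. -/
def lam (t : ℕ → ℂ) (a b : ℕ) : ℂ :=
  ∑ k ∈ Finset.Icc b a, ((a - b).choose (k - b) : ℂ) * t k

/-- The maximal elements of a finite subset `I` with respect to the relation `c`. -/
def maxIn {n : ℕ} (c : Fin n → Fin n → Prop) (I : Finset (Fin n)) : Finset (Fin n) :=
  I.filter fun i => ∀ j ∈ I, ¬ c i j

/-- The past of the element `m` in the node `p`. -/
def pastOf {n : ℕ} (p : Fin n → Fin n → Prop) (m : Fin n) : Finset (Fin n) :=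
  Finset.univ.filter fun i => p i m

/-- The ℂSG amplitude of (the cylinder set of) an `n`-node:
∏_{m=1}^{n−1} λ(ϖ_m, μ_m)/λ(m,0). -/
def amp (t : ℕ → ℂ) {n : ℕ} (p : Fin n → Fin n → Prop) : ℂ :=
  ∏ m ∈ Finset.univ.filter (fun m : Fin n => 1 ≤ (m : ℕ)),
    lam t (pastOf p m).card (maxIn p (pastOf p m)).card / lam t (m : ℕ) 0

/-- μ is the ℂSG measure associated to the coupling constants t: it is finitely
additive on 𝔜 and takes the prescribed values on cylinder sets. -/
def IsCSG (t : ℕ → ℂ) (μ : Set Omega → ℂ) : Prop :=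
  FinitelyAdditive μ ∧
    ∀ (n : ℕ), 1 ≤ n → ∀ p : Fin n → Fin n → Prop, IsNode p → μ (Cyl p) = amp t p

/-- `I` is an order ideal (downward-closed set) of the relation `c`. -/
def isIdeal {n : ℕ} (c : Fin n → Fin n → Prop) (I : Finset (Fin n)) : Prop :=
  ∀ j ∈ I, ∀ i, c i j → i ∈ I

/-- Q(c) := Σ_{I an order ideal of c} |λ(|I|, m(I))|. -/
def Qval (t : ℕ → ℂ) {n : ℕ} (c : Fin n → Fin n → Prop) : ℝ :=
  ∑ I ∈ Finset.univ.filter (fun I : Finset (Fin n) => isIdeal c I),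
    ‖lam t I.card (maxIn c I).card‖

/-- ζ(c) := Q(c)/|λ(n,0)| − 1. -/
def zeta (t : ℕ → ℂ) {n : ℕ} (c : Fin n → Fin n → Prop) : ℝ :=
  Qval t c / ‖lam t n 0‖ - 1

/-- ζ_n^a := (Σ_{k=0}^{n} C(n,k)·|t_k|)/|λ(n,0)| − 1. -/
def zetaA (t : ℕ → ℂ) (n : ℕ) : ℝ :=
  (∑ k ∈ Finset.range (n + 1), (n.choose k : ℝ) * ‖t k‖) /
    ‖lam t n 0‖ - 1

/-- ζ_n^c := (|t_0| + Σ_{ϖ=1}^{n} |λ(ϖ,1)|)/|λ(n,0)| − 1. -/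
def zetaC (t : ℕ → ℂ) (n : ℕ) : ℝ :=
  (‖t 0‖ + ∑ w ∈ Finset.Icc 1 n, ‖lam t w 1‖) /
    ‖lam t n 0‖ - 1

/-- S_n := Σ_{p an n-node} |μ(Cyl(p))|. -/
def Svar (μ : Set Omega → ℂ) (n : ℕ) : ℝ :=
  ∑ p : {p : Fin n → Fin n → Prop // IsNode p}, ‖μ (Cyl p.1)‖

section Part1
variable {k : ℕ} {z : ℂ} {t : ℕ → ℂ}

lemma lam_zero (hk : 2 ≤ k) (ht0 : t 0 = 1) (htk : t k = z)
    (ht : ∀ j : ℕ, 1 ≤ j → j ≠ k → t j = 0) (m : ℕ) :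
    lam t m 0 = 1 + (m.choose k : ℂ) * z := by
  unfold lam
  have hterm : ∀ j ∈ Finset.Icc 0 m,
      ((m - 0).choose (j - 0) : ℂ) * t j
        = (if j = 0 then (1:ℂ) else 0) + (if j = k then ((m.choose k : ℂ) * z) else 0) := by
    intro j hj
    simp only [Nat.sub_zero]
    by_cases h0 : j = 0
    · subst h0
      have : (0:ℕ) ≠ k := by omega
      simp [ht0, this]
    · by_cases hkk : j = k
      · subst hkk
        simp [htk, h0]
      · rw [ht j (by omega) hkk]
        simp [h0, hkk]
  rw [Finset.sum_congr rfl hterm, Finset.sum_add_distrib,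
    Finset.sum_ite_eq' (Finset.Icc 0 m) 0 (fun _ => (1:ℂ)),
    Finset.sum_ite_eq' (Finset.Icc 0 m) k (fun _ => (m.choose k : ℂ) * z)]
  by_cases hkm : k ≤ m
  · simp [hkm]
  · have : m.choose k = 0 := Nat.choose_eq_zero_of_lt (by omega)
    simp [hkm, this]

lemma lam_pos (hk : 2 ≤ k) (htk : t k = z)
    (ht : ∀ j : ℕ, 1 ≤ j → j ≠ k → t j = 0) (a b : ℕ) (hb : 1 ≤ b) :
    lam t a b = if b ≤ k ∧ k ≤ a then ((a-b).choose (k-b) : ℂ) * z else 0 := by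
  unfold lam
  have hterm : ∀ j ∈ Finset.Icc b a,
      ((a - b).choose (j - b) : ℂ) * t j
        = (if j = k then ((a-b).choose (k-b) : ℂ) * z else 0) := by
    intro j hj
    simp only [Finset.mem_Icc] at hj
    by_cases hkk : j = k
    · subst hkk; simp [htk]
    · rw [ht j (by omega) hkk]; simp [hkk]
  rw [Finset.sum_congr rfl hterm,
    Finset.sum_ite_eq' (Finset.Icc b a) k (fun _ => ((a-b).choose (k-b) : ℂ) * z)]
  simp [Finset.mem_Icc]

lemma numer_eq (hk : 2 ≤ k) (ht0 : t 0 = 1) (htk : t k = z)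
    (ht : ∀ j : ℕ, 1 ≤ j → j ≠ k → t j = 0) (n : ℕ) :
    ∑ j ∈ Finset.range (n + 1), (n.choose j : ℝ) * ‖t j‖
      = 1 + (n.choose k : ℝ) * ‖z‖ := by
  have hterm : ∀ j ∈ Finset.range (n+1),
      (n.choose j : ℝ) * ‖t j‖
        = (if j = 0 then (1:ℝ) else 0)
          + (if j = k then ((n.choose k : ℝ) * ‖z‖) else 0) := by
    intro j hj
    by_cases h0 : j = 0
    · subst h0
      have : (0:ℕ) ≠ k := by omega
      simp [ht0, this]
    · by_cases hkk : j = k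
      · subst hkk; simp [htk, h0]
      · rw [ht j (by omega) hkk]; simp [h0, hkk]
  rw [Finset.sum_congr rfl hterm, Finset.sum_add_distrib,
    Finset.sum_ite_eq' (Finset.range (n+1)) 0 (fun _ => (1:ℝ)),
    Finset.sum_ite_eq' (Finset.range (n+1)) k (fun _ => (n.choose k : ℝ) * ‖z‖)]
  by_cases hkm : k ≤ n
  · simp [Finset.mem_range, Nat.lt_succ_iff, hkm]
  · have : n.choose k = 0 := Nat.choose_eq_zero_of_lt (by omega)
    simp [Finset.mem_range, Nat.lt_succ_iff, hkm, this]

lemma zetaA_eq (hk : 2 ≤ k) (ht0 : t 0 = 1) (htk : t k = z)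
    (ht : ∀ j : ℕ, 1 ≤ j → j ≠ k → t j = 0) (n : ℕ) :
    zetaA t n = (1 + (n.choose k : ℝ) * ‖z‖) /
        ‖1 + (n.choose k : ℂ) * z‖ - 1 := by
  unfold zetaA
  rw [numer_eq hk ht0 htk ht, lam_zero hk ht0 htk ht]

end Part1
section Part2
variable {k : ℕ} {z : ℂ} {t : ℕ → ℂ}

lemma den_pos (hne : ∀ n : ℕ, 1 + (n.choose k : ℂ) * z ≠ 0) (n : ℕ) :
    0 < ‖1 + (n.choose k : ℂ) * z‖ :=
  norm_pos_iff.mpr (hne n)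

lemma zetaA_nonneg (hk : 2 ≤ k) (ht0 : t 0 = 1) (htk : t k = z)
    (ht : ∀ j : ℕ, 1 ≤ j → j ≠ k → t j = 0)
    (hne : ∀ n : ℕ, 1 + (n.choose k : ℂ) * z ≠ 0) (n : ℕ) :
    0 ≤ zetaA t n := by
  rw [zetaA_eq hk ht0 htk ht]
  have hd := den_pos hne n
  rw [sub_nonneg, le_div_iff₀ hd, one_mul]
  calc ‖1 + (n.choose k : ℂ) * z‖
      ≤ ‖1‖ + ‖(n.choose k : ℂ) * z‖ := norm_add_le _ _
    _ = 1 + (n.choose k : ℝ) * ‖z‖ := by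
        simp [norm_mul, Complex.norm_natCast]

lemma zetaA_le (hk : 2 ≤ k) (ht0 : t 0 = 1) (htk : t k = z)
    (ht : ∀ j : ℕ, 1 ≤ j → j ≠ k → t j = 0)
    (hne : ∀ n : ℕ, 1 + (n.choose k : ℂ) * z ≠ 0) (n : ℕ) :
    zetaA t n ≤ 2 / ‖1 + (n.choose k : ℂ) * z‖ := by
  rw [zetaA_eq hk ht0 htk ht]
  have hd := den_pos hne n
  rw [sub_le_iff_le_add, div_add' _ _ _ (ne_of_gt hd), div_le_div_iff₀ hd hd]
  have h1 : (n.choose k : ℝ) * ‖z‖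
      ≤ ‖1 + (n.choose k : ℂ) * z‖ + 1 := by
    have : (n.choose k : ℝ) * ‖z‖
        = ‖(1 + (n.choose k : ℂ) * z) - 1‖ := by
      simp [norm_mul, Complex.norm_natCast]
    rw [this]
    rw [sub_eq_add_neg]
    calc ‖(1 + (n.choose k : ℂ) * z) + (-1)‖
        ≤ ‖1 + (n.choose k : ℂ) * z‖ + ‖(-1 : ℂ)‖ :=
          norm_add_le _ _
      _ = ‖1 + (n.choose k : ℂ) * z‖ + 1 := by simp
  nlinarith [hd]

lemma abs_den_ge (hne : ∀ n : ℕ, 1 + (n.choose k : ℂ) * z ≠ 0) (n : ℕ) :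
    (n.choose k : ℝ) * ‖z‖ - 1 ≤ ‖1 + (n.choose k : ℂ) * z‖ := by
  have : (n.choose k : ℝ) * ‖z‖ = ‖(n.choose k : ℂ) * z‖ := by
    simp [norm_mul, Complex.norm_natCast]
  rw [this, sub_le_iff_le_add]
  calc ‖(n.choose k : ℂ) * z‖
      = ‖(1 + (n.choose k : ℂ) * z) + (-1)‖ := by ring_nf
    _ ≤ ‖1 + (n.choose k : ℂ) * z‖ + ‖(-1 : ℂ)‖ :=
        norm_add_le _ _
    _ = ‖1 + (n.choose k : ℂ) * z‖ + 1 := by simp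

lemma summable_zetaA (hk : 2 ≤ k) (hz : z ≠ 0) (ht0 : t 0 = 1) (htk : t k = z)
    (ht : ∀ j : ℕ, 1 ≤ j → j ≠ k → t j = 0)
    (hne : ∀ n : ℕ, 1 + (n.choose k : ℂ) * z ≠ 0) :
    Summable (zetaA t) := by
  have hza : 0 < ‖z‖ := norm_pos_iff.mpr hz
  obtain ⟨m, hm⟩ := exists_nat_ge (2 * (k.factorial : ℝ) / ‖z‖)
  set N := k + m with hN
  have hchoose_lb : ∀ n : ℕ, ((n + 1 - k : ℕ) ^ k : ℝ) / (k.factorial : ℝ) ≤ n.choose k :=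
    fun n => Nat.pow_le_choose k n
  have hfac_pos : (0:ℝ) < (k.factorial : ℝ) := by positivity
  have hbig : ∀ n : ℕ, N ≤ n → 2 ≤ (n.choose k : ℝ) * ‖z‖ := by
    intro n hn
    have h1 : (N.choose k : ℝ) ≤ n.choose k := by
      exact_mod_cast Nat.choose_le_choose k hn
    have hp : ((m:ℝ) + 1) ≤ ((N + 1 - k : ℕ) ^ k : ℝ) := by
      have he : ((N + 1 - k : ℕ) ^ k : ℝ) = ((m:ℝ)+1)^k := by
        have : N + 1 - k = m + 1 := by omega
        rw [this]; push_cast; ring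
      rw [he]
      calc (m:ℝ)+1 = ((m:ℝ)+1)^1 := by ring
        _ ≤ ((m:ℝ)+1)^k := by
            apply pow_le_pow_right₀ (by linarith [Nat.cast_nonneg (α := ℝ) m]) (by omega)
    have h3 : ((m:ℝ)+1)/(k.factorial : ℝ) ≤ (N.choose k : ℝ) :=
      le_trans (by gcongr) (hchoose_lb N)
    have h4 : 2 * (k.factorial : ℝ) / ‖z‖ ≤ m := hm
    rw [div_le_iff₀ hza] at h4
    rw [div_le_iff₀ hfac_pos] at h3
    nlinarith
  rw [← summable_nat_add_iff N]
  have hb : Summable (fun i : ℕ => (4 * (k.factorial : ℝ) / ‖z‖) * (1 / ((i:ℝ)+1)^2)) := by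
    apply Summable.mul_left
    have h0 : Summable (fun n : ℕ => 1 / (n:ℝ)^2) := by
      rw [Real.summable_one_div_nat_pow]; norm_num
    have h1 := (summable_nat_add_iff 1).2 h0
    convert h1 using 2 with i
    · rfl
    · norm_num
  apply Summable.of_nonneg_of_le (fun i => zetaA_nonneg hk ht0 htk ht hne _) _ hb
  intro i
  set n := i + N with hn
  have hNn : N ≤ n := by omega
  have hC2 := hbig n hNn
  have hd := den_pos hne n
  have hCpos : (0:ℝ) < (n.choose k : ℝ) := by nlinarith
  have hden : ((n.choose k : ℝ) * ‖z‖) / 2 ≤ ‖1 + (n.choose k : ℂ) * z‖ := by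
    have := abs_den_ge hne n
    linarith
  have hζ : zetaA t n ≤ 4 / ((n.choose k : ℝ) * ‖z‖) := by
    calc zetaA t n ≤ 2 / ‖1 + (n.choose k : ℂ) * z‖ := zetaA_le hk ht0 htk ht hne n
      _ ≤ 2 / (((n.choose k : ℝ) * ‖z‖) / 2) := by
          apply div_le_div_of_nonneg_left (by norm_num) (by linarith) hden
      _ = 4 / ((n.choose k : ℝ) * ‖z‖) := by
          rw [div_div_eq_mul_div]; ring
  refine hζ.trans ?_
  have hCk : ((i:ℝ)+1)^2 ≤ (n.choose k : ℝ) * (k.factorial : ℝ) := by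
    have h1 : ((n + 1 - k : ℕ) ^ k : ℝ) = ((i:ℝ)+(m:ℝ)+1)^k := by
      have : n + 1 - k = i + m + 1 := by omega
      rw [this]; push_cast; ring
    have h3 := hchoose_lb n
    rw [div_le_iff₀ hfac_pos] at h3
    rw [h1] at h3
    have h2 : ((i:ℝ)+1)^2 ≤ ((i:ℝ)+(m:ℝ)+1)^k := by
      calc ((i:ℝ)+1)^2 ≤ ((i:ℝ)+(m:ℝ)+1)^2 := by
            apply pow_le_pow_left₀ (by positivity) (by linarith [Nat.cast_nonneg (α := ℝ) m])
        _ ≤ ((i:ℝ)+(m:ℝ)+1)^k := by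
            apply pow_le_pow_right₀ (by linarith [Nat.cast_nonneg (α := ℝ) i, Nat.cast_nonneg (α := ℝ) m]) hk
    linarith
  have hrhs : (4 * (k.factorial : ℝ) / ‖z‖) * (1 / ((i:ℝ)+1)^2)
      = 4 * (k.factorial : ℝ) / (‖z‖ * ((i:ℝ)+1)^2) := by
    field_simp
  rw [hrhs, div_le_div_iff₀ (by positivity) (by positivity)]
  nlinarith [hza, hCk]
end Part2
section Alg

/-- Two causal sets agree below level `n`. -/
def Agree (n : ℕ) (r r' : Omega) : Prop := ∀ i j : Fin n, (r.1 i.1 j.1 ↔ r'.1 i.1 j.1)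

/-- `s` is determined by the first `n` levels. -/
def Lvl (n : ℕ) (s : Set Omega) : Prop :=
  ∀ r r' : Omega, Agree n r r' → (r ∈ s ↔ r' ∈ s)

lemma Agree.mono {n m : ℕ} (h : n ≤ m) {r r' : Omega} (ha : Agree m r r') : Agree n r r' :=
  fun i j => ha ⟨i.1, lt_of_lt_of_le i.2 h⟩ ⟨j.1, lt_of_lt_of_le j.2 h⟩

lemma Lvl.mono {n m : ℕ} (h : n ≤ m) {s : Set Omega} (hs : Lvl n s) : Lvl m s :=
  fun r r' ha => hs r r' (ha.mono h)

lemma Lvl.compl {n : ℕ} {s : Set Omega} (hs : Lvl n s) : Lvl n sᶜ :=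
  fun r r' ha => not_congr (hs r r' ha)

lemma Lvl.union {n : ℕ} {s u : Set Omega} (hs : Lvl n s) (hu : Lvl n u) : Lvl n (s ∪ u) :=
  fun r r' ha => or_congr (hs r r' ha) (hu r r' ha)

lemma exists_lvl {s : Set Omega} (hs : InAlg s) : ∃ n, 1 ≤ n ∧ Lvl n s := by
  induction hs with
  | @basic n hn p hp =>
      exact ⟨n, hn, fun r r' ha => by
        constructor <;> intro h i j
        · exact (ha i j).symm.trans (h i j)
        · exact (ha i j).trans (h i j)⟩
  | univ => exact ⟨1, le_refl 1, fun r r' _ => Iff.rfl⟩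
  | compl s hs ih => obtain ⟨n, hn, h⟩ := ih; exact ⟨n, hn, h.compl⟩
  | union s u hs hu ihs ihu =>
      obtain ⟨n, hn, h1⟩ := ihs
      obtain ⟨m, hm, h2⟩ := ihu
      exact ⟨max n m, le_trans hn (le_max_left _ _),
        (h1.mono (le_max_left _ _)).union (h2.mono (le_max_right _ _))⟩

/-- The restriction of a causal set to the first `n` elements. -/
def res (r : Omega) (n : ℕ) : Fin n → Fin n → Prop := fun i j => r.1 i.1 j.1

lemma isNode_res (r : Omega) (n : ℕ) : IsNode (res r n) :=
  ⟨fun i => r.2.1 i.1, fun _ _ _ h1 h2 => r.2.2.1 _ _ _ h1 h2,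
   fun _ _ h => r.2.2.2 _ _ h⟩

lemma mem_Cyl_res (r : Omega) (n : ℕ) : r ∈ Cyl (res r n) := fun _ _ => Iff.rfl

lemma agree_of_mem_Cyl {n : ℕ} {p : Fin n → Fin n → Prop} {r r' : Omega}
    (h : r ∈ Cyl p) (h' : r' ∈ Cyl p) : Agree n r r' :=
  fun i j => (h i j).trans (h' i j).symm

lemma Cyl_subset_of_lvl {n : ℕ} {p : Fin n → Fin n → Prop} {s : Set Omega}
    (hs : Lvl n s) {r : Omega} (hr : r ∈ Cyl p) (hrs : r ∈ s) : Cyl p ⊆ s := by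
  intro r' hr'
  exact (hs r r' (agree_of_mem_Cyl hr hr')).mp hrs

lemma node_eq_of_mem {n : ℕ} {p q : Fin n → Fin n → Prop} {r : Omega}
    (hp : r ∈ Cyl p) (hq : r ∈ Cyl q) : p = q := by
  funext i j
  exact propext (((hp i j).symm).trans (hq i j))

lemma Cyl_disjoint {n : ℕ} {p q : Fin n → Fin n → Prop} (h : p ≠ q) :
    Disjoint (Cyl p) (Cyl q) := by
  rw [Set.disjoint_left]
  intro r hp hq
  exact h (node_eq_of_mem hp hq)

lemma Cyl_nonempty {n : ℕ} {p : Fin n → Fin n → Prop} (hp : IsNode p) :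
    (Cyl p).Nonempty := by
  refine ⟨⟨fun a b => ∃ (ha : a < n) (hb : b < n), p ⟨a, ha⟩ ⟨b, hb⟩, ?_, ?_, ?_⟩, ?_⟩
  · rintro i ⟨ha, hb, h⟩
    exact hp.1 _ h
  · rintro i j l ⟨hi, hj, h1⟩ ⟨hj', hl, h2⟩
    exact ⟨hi, hl, hp.2.1 _ _ _ h1 h2⟩
  · rintro i j ⟨hi, hj, h⟩
    exact hp.2.2 _ _ h
  · intro i j
    constructor
    · rintro ⟨hi, hj, h⟩
      have hi' : (⟨i.1, hi⟩ : Fin n) = i := Fin.ext rfl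
      have hj' : (⟨j.1, hj⟩ : Fin n) = j := Fin.ext rfl
      rwa [hi', hj'] at h
    · intro h
      exact ⟨i.2, j.2, h⟩

end Alg
section MeasAdd
variable {μ : Set Omega → ℂ}

lemma InAlg_empty : InAlg (∅ : Set Omega) := by
  have := InAlg.compl _ InAlg.univ
  rwa [Set.compl_univ] at this

lemma mu_empty (hμ : FinitelyAdditive μ) : μ ∅ = 0 := by
  have := hμ ∅ ∅ InAlg_empty InAlg_empty (disjoint_bot_left)
  rw [Set.union_empty] at this
  have h2 : μ ∅ + μ ∅ = 0 + μ ∅ := by rw [zero_add]; exact this.symm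
  exact add_right_cancel h2

lemma InAlg_biUnion {α : Type*} [DecidableEq α] (F : Finset α) (f : α → Set Omega)
    (hf : ∀ i ∈ F, InAlg (f i)) : InAlg (⋃ i ∈ F, f i) := by
  induction F using Finset.induction_on with
  | empty => simpa using InAlg_empty
  | @insert a F ha ih =>
      rw [Finset.set_biUnion_insert]
      exact InAlg.union _ _ (hf a (Finset.mem_insert_self a F))
        (ih fun i hi => hf i (Finset.mem_insert_of_mem hi))

lemma mu_biUnion (hμ : FinitelyAdditive μ) {α : Type*} [DecidableEq α]
    (F : Finset α) (f : α → Set Omega)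
    (hf : ∀ i ∈ F, InAlg (f i)) (hd : (↑F : Set α).PairwiseDisjoint f) :
    μ (⋃ i ∈ F, f i) = ∑ i ∈ F, μ (f i) := by
  induction F using Finset.induction_on with
  | empty => simpa using mu_empty hμ
  | @insert a F ha ih =>
      rw [Finset.set_biUnion_insert, Finset.sum_insert ha]
      have hdisj : Disjoint (f a) (⋃ i ∈ F, f i) := by
        rw [Set.disjoint_iff_inter_eq_empty, Set.inter_iUnion₂]
        apply Set.eq_empty_of_forall_notMem
        intro x hx
        simp only [Set.mem_iUnion] at hx
        obtain ⟨i, hi, hx⟩ := hx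
        have : Disjoint (f a) (f i) := hd (Finset.mem_insert_self a F)
          (Finset.mem_insert_of_mem hi) (fun h => ha (h ▸ hi))
        exact Set.disjoint_iff.mp this hx
      rw [hμ _ _ (hf a (Finset.mem_insert_self a F))
        (InAlg_biUnion F f fun i hi => hf i (Finset.mem_insert_of_mem hi)) hdisj,
        ih (fun i hi => hf i (Finset.mem_insert_of_mem hi))
          (hd.subset (by simp [Finset.coe_subset]))]

/-- The finset of `n`-nodes whose cylinder is contained in `s`. -/
def nodesIn (n : ℕ) (s : Set Omega) : Finset {p : Fin n → Fin n → Prop // IsNode p} :=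
  Finset.univ.filter fun p => Cyl p.1 ⊆ s

lemma s_eq_biUnion {n : ℕ} (hn : 1 ≤ n) {s : Set Omega} (hs : Lvl n s) :
    s = ⋃ p ∈ nodesIn n s, Cyl p.1 := by
  ext r
  constructor
  · intro hr
    have hmem := mem_Cyl_res r n
    have hsub : Cyl (res r n) ⊆ s := Cyl_subset_of_lvl hs hmem hr
    apply Set.mem_iUnion.mpr
    refine ⟨⟨res r n, isNode_res r n⟩, ?_⟩
    apply Set.mem_iUnion.mpr
    refine ⟨?_, hmem⟩
    simp [nodesIn, hsub]
  · intro hr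
    simp only [Set.mem_iUnion] at hr
    obtain ⟨p, hp, hr⟩ := hr
    simp only [nodesIn, Finset.mem_filter] at hp
    exact hp.2 hr

lemma abs_mu_le {t : ℕ → ℂ} (hμ : IsCSG t μ) {n : ℕ} (hn : 1 ≤ n)
    {s : Set Omega} (hs : Lvl n s) :
    ‖μ s‖ ≤ ∑ p ∈ nodesIn n s, ‖μ (Cyl p.1)‖ := by
  have h1 : μ s = ∑ p ∈ nodesIn n s, μ (Cyl p.1) := by
    conv_lhs => rw [s_eq_biUnion hn hs]
    apply mu_biUnion hμ.1
    · intro p _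
      exact InAlg.basic hn p.1 p.2
    · intro p _ q _ hpq
      apply Cyl_disjoint
      intro h
      exact hpq (Subtype.ext h)
  rw [h1]
  exact norm_sum_le _ _
end MeasAdd
section Partition
variable {μ : Set Omega → ℂ} {t : ℕ → ℂ}

lemma partition_le_Svar (hμ : IsCSG t μ) (π : Finset (Set Omega)) (hπ : IsPartition π)
    {N : ℕ} (hN : 1 ≤ N) (hlvl : ∀ s ∈ π, Lvl N s) :
    ∑ s ∈ π, ‖μ s‖ ≤ Svar μ N := by
  have h1 : ∑ s ∈ π, ‖μ s‖
      ≤ ∑ s ∈ π, ∑ p ∈ nodesIn N s, ‖μ (Cyl p.1)‖ :=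
    Finset.sum_le_sum fun s hs => abs_mu_le hμ hN (hlvl s hs)
  have hd : (↑π : Set (Set Omega)).PairwiseDisjoint (nodesIn N ·) := by
    intro s hs u hu hsu
    simp only [Function.onFun]
    rw [Finset.disjoint_left]
    intro p hp hp'
    simp only [nodesIn, Finset.mem_filter] at hp hp'
    obtain ⟨r, hr⟩ := Cyl_nonempty p.2
    have hdis : Disjoint s u := hπ.2.1 hs hu hsu
    exact Set.disjoint_iff.mp hdis ⟨hp.2 hr, hp'.2 hr⟩
  have h2 : ∑ s ∈ π, ∑ p ∈ nodesIn N s, ‖μ (Cyl p.1)‖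
      = ∑ p ∈ π.biUnion (nodesIn N ·), ‖μ (Cyl p.1)‖ :=
    (Finset.sum_biUnion hd).symm
  have h3 : ∑ p ∈ π.biUnion (nodesIn N ·), ‖μ (Cyl p.1)‖ ≤ Svar μ N := by
    apply Finset.sum_le_sum_of_subset_of_nonneg (Finset.subset_univ _)
    intro p _ _
    exact norm_nonneg _
  calc ∑ s ∈ π, ‖μ s‖ ≤ _ := h1
    _ = _ := h2
    _ ≤ Svar μ N := h3

/-- choose a level for each set. -/
def lvlOf (s : Set Omega) : ℕ :=
  if h : ∃ n, 1 ≤ n ∧ Lvl n s then h.choose else 1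

lemma lvlOf_spec {s : Set Omega} (hs : InAlg s) : Lvl (lvlOf s) s := by
  have h : ∃ n, 1 ≤ n ∧ Lvl n s := exists_lvl hs
  rw [lvlOf, dif_pos h]
  exact h.choose_spec.2

lemma partition_bound (hμ : IsCSG t μ) (B : ℝ) (hB : ∀ N, 1 ≤ N → Svar μ N ≤ B)
    (π : Finset (Set Omega)) (hπ : IsPartition π) :
    ∑ s ∈ π, ‖μ s‖ ≤ B := by
  set N := max 1 (π.sup lvlOf) with hN
  have h1 : 1 ≤ N := le_max_left _ _
  have hlvl : ∀ s ∈ π, Lvl N s := by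
    intro s hs
    exact (lvlOf_spec (hπ.1 s hs)).mono
      (le_trans (Finset.le_sup hs) (le_max_right _ _))
  exact le_trans (partition_le_Svar hμ π hπ h1 hlvl) (hB N h1)

end Partition
section Restrict
variable {n : ℕ}

lemma mem_maxIn {c : Fin n → Fin n → Prop} {I : Finset (Fin n)} {i : Fin n} :
    i ∈ maxIn c I ↔ i ∈ I ∧ ∀ j ∈ I, ¬ c i j := by simp [maxIn]

lemma mem_pastOf {p : Fin n → Fin n → Prop} {m i : Fin n} :
    i ∈ pastOf p m ↔ p i m := by simp [pastOf]

/-- `Fin.castSucc` as an embedding. -/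
def castE (n : ℕ) : Fin n ↪ Fin (n+1) := ⟨Fin.castSucc, Fin.castSucc_injective n⟩

def restrictN (q : Fin (n+1) → Fin (n+1) → Prop) : Fin n → Fin n → Prop :=
  fun i j => q i.castSucc j.castSucc

def pastTop (q : Fin (n+1) → Fin (n+1) → Prop) : Finset (Fin n) :=
  Finset.univ.filter fun i => q i.castSucc (Fin.last n)

lemma mem_pastTop {q : Fin (n+1) → Fin (n+1) → Prop} {i : Fin n} :
    i ∈ pastTop q ↔ q i.castSucc (Fin.last n) := by simp [pastTop]

lemma isNode_restrictN {q : Fin (n+1) → Fin (n+1) → Prop} (hq : IsNode q) :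
    IsNode (restrictN q) := by
  refine ⟨fun i h => hq.1 _ h, fun i j l h1 h2 => hq.2.1 _ _ _ h1 h2, fun i j h => ?_⟩
  have := hq.2.2 _ _ h
  simpa using this

lemma castSucc_mk (i : Fin (n+1)) (hi : i.1 < n) :
    Fin.castSucc (⟨i.1, hi⟩ : Fin n) = i := Fin.ext rfl

lemma pastOf_castSucc {q : Fin (n+1) → Fin (n+1) → Prop} (hq : IsNode q) (m : Fin n) :
    pastOf q m.castSucc = (pastOf (restrictN q) m).map (castE n) := by
  ext i
  rw [mem_pastOf, Finset.mem_map]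
  constructor
  · intro h
    have h1 := hq.2.2 _ _ h
    have hm : ((m.castSucc : Fin (n+1)) : ℕ) = (m : ℕ) := by simp
    have hmn : (m : ℕ) < n := m.2
    have hi : i.1 < n := by omega
    refine ⟨⟨i.1, hi⟩, ?_, castSucc_mk i hi⟩
    rw [mem_pastOf]
    show q (Fin.castSucc ⟨i.1, hi⟩) m.castSucc
    rwa [castSucc_mk i hi]
  · rintro ⟨a, ha, rfl⟩
    rw [mem_pastOf] at ha
    exact ha

lemma pastOf_last {q : Fin (n+1) → Fin (n+1) → Prop} (hq : IsNode q) :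
    pastOf q (Fin.last n) = (pastTop q).map (castE n) := by
  ext i
  rw [mem_pastOf, Finset.mem_map]
  constructor
  · intro h
    have h1 := hq.2.2 _ _ h
    have hl : ((Fin.last n : Fin (n+1)) : ℕ) = n := rfl
    have hi : i.1 < n := by omega
    refine ⟨⟨i.1, hi⟩, ?_, castSucc_mk i hi⟩
    rw [mem_pastTop]
    show q (Fin.castSucc ⟨i.1, hi⟩) (Fin.last n)
    rwa [castSucc_mk i hi]
  · rintro ⟨a, ha, rfl⟩
    rw [mem_pastTop] at ha
    exact ha

lemma maxIn_map (q : Fin (n+1) → Fin (n+1) → Prop) (S : Finset (Fin n)) :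
    maxIn q (S.map (castE n)) = (maxIn (restrictN q) S).map (castE n) := by
  ext i
  simp only [mem_maxIn, Finset.mem_map]
  constructor
  · rintro ⟨⟨a, ha, rfl⟩, hmax⟩
    exact ⟨a, ⟨ha, fun j hj h => hmax (castE n j) ⟨j, hj, rfl⟩ h⟩, rfl⟩
  · rintro ⟨a, ⟨ha, hmax⟩, rfl⟩
    exact ⟨⟨a, ha, rfl⟩, fun j hj h => by
      obtain ⟨b, hb, rfl⟩ := hj
      exact hmax b hb h⟩

set_option maxHeartbeats 1000000 in
lemma amp_factor (t : ℕ → ℂ) (hn : 1 ≤ n) {q : Fin (n+1) → Fin (n+1) → Prop}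
    (hq : IsNode q) :
    amp t q = amp t (restrictN q) *
      (lam t (pastTop q).card (maxIn (restrictN q) (pastTop q)).card / lam t n 0) := by
  unfold amp
  rw [Finset.prod_filter, Finset.prod_filter, Fin.prod_univ_castSucc]
  congr 1
  · apply Finset.prod_congr rfl
    intro m _
    have hcs : ((m.castSucc : Fin (n+1)) : ℕ) = (m : ℕ) := by simp
    rw [hcs]
    by_cases h1 : 1 ≤ (m : ℕ)
    · rw [if_pos h1, if_pos h1, pastOf_castSucc hq m, maxIn_map, Finset.card_map,
        Finset.card_map]
    · rw [if_neg h1, if_neg h1]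
  · have hlast : ((Fin.last n : Fin (n+1)) : ℕ) = n := rfl
    rw [hlast, if_pos hn, pastOf_last hq, maxIn_map, Finset.card_map, Finset.card_map]

def extN (c : Fin n → Fin n → Prop) (I : Finset (Fin n)) : Fin (n+1) → Fin (n+1) → Prop :=
  fun i j => (∃ (hi : (i:ℕ) < n) (hj : (j:ℕ) < n), c ⟨i.1, hi⟩ ⟨j.1, hj⟩) ∨
    ((j:ℕ) = n ∧ ∃ hi : (i:ℕ) < n, (⟨i.1, hi⟩ : Fin n) ∈ I)

lemma isNode_extN {c : Fin n → Fin n → Prop} {I : Finset (Fin n)}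
    (hc : IsNode c) (hI : isIdeal c I) : IsNode (extN c I) := by
  refine ⟨?_, ?_, ?_⟩
  · rintro i (⟨hi, hj, h⟩ | ⟨hj, hi, _⟩)
    · exact hc.1 _ h
    · omega
  · rintro i j l (⟨hi, hj, h1⟩ | ⟨hj, hi', _⟩) h2
    · rcases h2 with ⟨hj', hl, h2⟩ | ⟨hl, hj', hmem⟩
      · exact Or.inl ⟨hi, hl, hc.2.1 _ _ _ h1 h2⟩
      · exact Or.inr ⟨hl, hi, hI _ hmem _ h1⟩
    · rcases h2 with ⟨hj', _, _⟩ | ⟨_, hj', _⟩ <;> omega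
  · rintro i j (⟨hi, hj, h⟩ | ⟨hj, hi, _⟩)
    · exact hc.2.2 _ _ h
    · omega

lemma restrictN_extN (c : Fin n → Fin n → Prop) (I : Finset (Fin n)) :
    restrictN (extN c I) = c := by
  funext i j
  apply propext
  show extN c I i.castSucc j.castSucc ↔ c i j
  constructor
  · rintro (⟨hi, hj, h⟩ | ⟨hj, _, _⟩)
    · have e1 : (⟨((i.castSucc : Fin (n+1)) : ℕ), hi⟩ : Fin n) = i := Fin.ext (by simp)
      have e2 : (⟨((j.castSucc : Fin (n+1)) : ℕ), hj⟩ : Fin n) = j := Fin.ext (by simp)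
      rwa [e1, e2] at h
    · have h2 : ((j.castSucc : Fin (n+1)) : ℕ) = (j : ℕ) := by simp
      have := j.2
      omega
  · intro h
    left
    have hi : ((i.castSucc : Fin (n+1)) : ℕ) < n := by simpa using i.2
    have hj : ((j.castSucc : Fin (n+1)) : ℕ) < n := by simpa using j.2
    refine ⟨hi, hj, ?_⟩
    have e1 : (⟨((i.castSucc : Fin (n+1)) : ℕ), hi⟩ : Fin n) = i := Fin.ext (by simp)
    have e2 : (⟨((j.castSucc : Fin (n+1)) : ℕ), hj⟩ : Fin n) = j := Fin.ext (by simp)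
    rwa [e1, e2]

lemma pastTop_extN (c : Fin n → Fin n → Prop) (I : Finset (Fin n)) :
    pastTop (extN c I) = I := by
  ext i
  rw [mem_pastTop]
  show extN c I i.castSucc (Fin.last n) ↔ i ∈ I
  constructor
  · rintro (⟨hi, hj, _⟩ | ⟨_, hi, hmem⟩)
    · have : ((Fin.last n : Fin (n+1)) : ℕ) = n := rfl
      omega
    · have e : (⟨((i.castSucc : Fin (n+1)) : ℕ), hi⟩ : Fin n) = i := Fin.ext (by simp)
      rwa [e] at hmem
  · intro h
    right
    refine ⟨rfl, ?_⟩
    have hi : ((i.castSucc : Fin (n+1)) : ℕ) < n := by simpa using i.2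
    have e : (⟨((i.castSucc : Fin (n+1)) : ℕ), hi⟩ : Fin n) = i := Fin.ext (by simp)
    exact ⟨hi, by rwa [e]⟩

lemma extN_restrictN {q : Fin (n+1) → Fin (n+1) → Prop} (hq : IsNode q) :
    extN (restrictN q) (pastTop q) = q := by
  funext i j
  apply propext
  constructor
  · rintro (⟨hi, hj, h⟩ | ⟨hj, hi, hmem⟩)
    · have e1 := castSucc_mk i hi
      have e2 := castSucc_mk j hj
      show q i j
      have h' : q (Fin.castSucc ⟨i.1, hi⟩) (Fin.castSucc ⟨j.1, hj⟩) := h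
      rwa [e1, e2] at h'
    · rw [mem_pastTop, castSucc_mk i hi] at hmem
      have hjl : j = Fin.last n := Fin.ext (by simpa using hj)
      rw [hjl]
      exact hmem
  · intro h
    have hij := hq.2.2 _ _ h
    have hj2 : j.1 < n + 1 := j.2
    by_cases hjn : j.1 < n
    · left
      have hi : i.1 < n := by omega
      refine ⟨hi, hjn, ?_⟩
      show q (Fin.castSucc ⟨i.1, hi⟩) (Fin.castSucc ⟨j.1, hjn⟩)
      rwa [castSucc_mk i hi, castSucc_mk j hjn]
    · right
      have hjn' : j.1 = n := by omega
      have hi : i.1 < n := by omega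
      refine ⟨hjn', hi, ?_⟩
      rw [mem_pastTop, castSucc_mk i hi]
      have hlj : Fin.last n = j := Fin.ext (by simp [hjn'])
      rwa [hlj]

lemma isIdeal_pastTop {q : Fin (n+1) → Fin (n+1) → Prop} (hq : IsNode q) :
    isIdeal (restrictN q) (pastTop q) := by
  intro j hj i hij
  rw [mem_pastTop] at hj ⊢
  exact hq.2.1 _ _ _ hij hj

end Restrict
section TRec
variable {t : ℕ → ℂ} {μ : Set Omega → ℂ}

/-- Sum of |amp| over all n-nodes. -/
def Tn (t : ℕ → ℂ) (n : ℕ) : ℝ :=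
  ∑ p : {p : Fin n → Fin n → Prop // IsNode p}, ‖amp t p.1‖

lemma Svar_eq_Tn (hμ : IsCSG t μ) {n : ℕ} (hn : 1 ≤ n) : Svar μ n = Tn t n :=
  Finset.sum_congr rfl fun p _ => by rw [hμ.2 n hn p.1 p.2]

lemma Tn_nonneg (n : ℕ) : 0 ≤ Tn t n :=
  Finset.sum_nonneg fun _ _ => norm_nonneg _

lemma Tn_one : Tn t 1 = 1 := by
  have hamp : ∀ p : {p : Fin 1 → Fin 1 → Prop // IsNode p}, amp t p.1 = 1 := by
    intro p
    unfold amp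
    have he : (Finset.univ.filter fun m : Fin 1 => 1 ≤ (m : ℕ)) = ∅ := by
      ext m
      have : (m : ℕ) = 0 := by omega
      simp [this]
    rw [he, Finset.prod_empty]
  have hcard : Fintype.card {p : Fin 1 → Fin 1 → Prop // IsNode p} = 1 := by
    rw [Fintype.card_eq_one_iff]
    refine ⟨⟨fun _ _ => False, ⟨fun _ h => h, fun _ _ _ h _ => h, fun _ _ h => h.elim⟩⟩, ?_⟩
    intro b
    apply Subtype.ext
    funext i j
    apply propext
    constructor
    · intro h
      have := b.2.2.2 i j h
      have hi : (i : ℕ) < 1 := i.2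
      have hj : (j : ℕ) < 1 := j.2
      omega
    · exact fun h => h.elim
  unfold Tn
  rw [Finset.sum_congr rfl (fun p _ => by rw [hamp p, norm_one])]
  rw [Finset.sum_const, Finset.card_univ, hcard]
  simp

lemma T_succ {n : ℕ} (hn : 1 ≤ n) :
    Tn t (n+1) = ∑ c : {c : Fin n → Fin n → Prop // IsNode c},
      ‖amp t c.1‖ * (Qval t c.1 / ‖lam t n 0‖) := by
  have h1 : Tn t (n+1) = ∑ c : {c : Fin n → Fin n → Prop // IsNode c},
      ∑ q ∈ Finset.univ.filter
        (fun q : {q : Fin (n+1) → Fin (n+1) → Prop // IsNode q} =>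
          (⟨restrictN q.1, isNode_restrictN q.2⟩ : {c : Fin n → Fin n → Prop // IsNode c}) = c),
      ‖amp t q.1‖ := (Finset.sum_fiberwise _ _ _).symm
  rw [h1]
  apply Finset.sum_congr rfl
  intro c _
  have h2 : ‖amp t c.1‖ * (Qval t c.1 / ‖lam t n 0‖)
      = ∑ I ∈ Finset.univ.filter (fun I : Finset (Fin n) => isIdeal c.1 I),
        ‖amp t c.1‖ *
          (‖lam t I.card (maxIn c.1 I).card‖ / ‖lam t n 0‖) := by
    rw [Qval, Finset.sum_div, Finset.mul_sum]
  rw [h2]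
  have hres : ∀ q : {q : Fin (n+1) → Fin (n+1) → Prop // IsNode q},
      q ∈ Finset.univ.filter
        (fun q : {q : Fin (n+1) → Fin (n+1) → Prop // IsNode q} =>
          (⟨restrictN q.1, isNode_restrictN q.2⟩ : {c : Fin n → Fin n → Prop // IsNode c}) = c)
      → restrictN q.1 = c.1 := by
    intro q hq
    have := (Finset.mem_filter.mp hq).2
    exact congrArg Subtype.val this
  refine Finset.sum_bij' (i := fun q _ => pastTop q.1)
    (j := fun I hI => ⟨extN c.1 I, isNode_extN c.2 (Finset.mem_filter.mp hI).2⟩)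
    ?_ ?_ ?_ ?_ ?_
  · intro q hq
    rw [Finset.mem_filter]
    refine ⟨Finset.mem_univ _, ?_⟩
    have h := isIdeal_pastTop q.2
    rwa [hres q hq] at h
  · intro I hI
    rw [Finset.mem_filter]
    refine ⟨Finset.mem_univ _, ?_⟩
    exact Subtype.ext (restrictN_extN c.1 I)
  · intro q hq
    apply Subtype.ext
    show extN c.1 (pastTop q.1) = q.1
    rw [← hres q hq]
    exact extN_restrictN q.2
  · intro I hI
    exact pastTop_extN c.1 I
  · intro q hq
    rw [amp_factor t hn q.2, hres q hq, norm_mul, norm_div]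

end TRec
section QBound
variable {n k : ℕ} {z : ℂ} {t : ℕ → ℂ} {c : Fin n → Fin n → Prop}

lemma maxIn_subset (c : Fin n → Fin n → Prop) (I : Finset (Fin n)) : maxIn c I ⊆ I :=
  Finset.filter_subset _ _

lemma exists_le_maxIn (hc : IsNode c) (I : Finset (Fin n)) :
    ∀ d : ℕ, ∀ i ∈ I, n - i.1 ≤ d → ∃ j ∈ maxIn c I, i = j ∨ c i j := by
  intro d
  induction d with
  | zero =>
      intro i hi hle
      have := i.2
      omega
  | succ d ih =>
      intro i hi hle
      by_cases h : ∀ j ∈ I, ¬ c i j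
      · exact ⟨i, mem_maxIn.mpr ⟨hi, h⟩, Or.inl rfl⟩
      · push_neg at h
        obtain ⟨j, hj, hcij⟩ := h
        have hij : i.1 < j.1 := hc.2.2 _ _ hcij
        obtain ⟨l, hl, hor⟩ := ih j hj (by omega)
        rcases hor with heq | hcjl
        · exact ⟨l, hl, Or.inr (heq ▸ hcij)⟩
        · exact ⟨l, hl, Or.inr (hc.2.1 _ _ _ hcij hcjl)⟩

lemma maxIn_nonempty (hc : IsNode c) {I : Finset (Fin n)} (hI : I.Nonempty) :
    (maxIn c I).Nonempty := by
  obtain ⟨i, hi⟩ := hI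
  obtain ⟨j, hj, _⟩ := exists_le_maxIn hc I n i hi (by omega)
  exact ⟨j, hj⟩

lemma natkey (hc : IsNode c) (G : Finset (Finset (Fin n)))
    (hG : ∀ I ∈ G, isIdeal c I ∧ I.Nonempty ∧ (maxIn c I).card ≤ k ∧ k ≤ I.card) :
    ∑ I ∈ G, (I.card - (maxIn c I).card).choose (k - (maxIn c I).card) ≤ n.choose k := by
  classical
  have hterm : ∀ I ∈ G, (I.card - (maxIn c I).card).choose (k - (maxIn c I).card)
      = (Finset.powersetCard (k - (maxIn c I).card) (I \ maxIn c I)).card := by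
    intro I hI
    rw [Finset.card_powersetCard, Finset.card_sdiff_of_subset (maxIn_subset c I)]
  rw [Finset.sum_congr rfl hterm, ← Finset.card_sigma]
  have hmaps : ∀ x ∈ G.sigma (fun I => Finset.powersetCard (k - (maxIn c I).card) (I \ maxIn c I)),
      maxIn c x.1 ∪ x.2 ∈ Finset.powersetCard k (Finset.univ : Finset (Fin n)) := by
    rintro ⟨I, T⟩ hx
    dsimp only
    rw [Finset.mem_sigma] at hx
    obtain ⟨hIG, hT⟩ := hx
    dsimp only at hT
    rw [Finset.mem_powersetCard] at hT ⊢
    obtain ⟨hTsub, hTcard⟩ := hT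
    obtain ⟨hid, hne, hmk, hkc⟩ := hG I hIG
    have hdisj : Disjoint (maxIn c I) T := by
      rw [Finset.disjoint_left]
      intro a ha haT
      exact (Finset.mem_sdiff.mp (hTsub haT)).2 ha
    refine ⟨Finset.subset_univ _, ?_⟩
    rw [Finset.card_union_of_disjoint hdisj, hTcard]
    omega
  have hdown : ∀ x ∈ G.sigma (fun I => Finset.powersetCard (k - (maxIn c I).card) (I \ maxIn c I)),
      Finset.univ.filter (fun i => ∃ j ∈ maxIn c x.1 ∪ x.2, i = j ∨ c i j) = x.1 := by
    rintro ⟨I, T⟩ hx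
    dsimp only
    rw [Finset.mem_sigma] at hx
    obtain ⟨hIG, hT⟩ := hx
    dsimp only at hT
    rw [Finset.mem_powersetCard] at hT
    obtain ⟨hTsub, hTcard⟩ := hT
    obtain ⟨hid, hne, hmk, hkc⟩ := hG I hIG
    ext i
    simp only [Finset.mem_filter, Finset.mem_univ, true_and]
    constructor
    · rintro ⟨j, hj, hor⟩
      have hjI : j ∈ I := by
        rcases Finset.mem_union.mp hj with h | h
        · exact maxIn_subset c I h
        · exact (Finset.mem_sdiff.mp (hTsub h)).1
      rcases hor with rfl | hcij
      · exact hjI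
      · exact hid j hjI i hcij
    · intro hi
      obtain ⟨j, hj, hor⟩ := exists_le_maxIn hc I n i hi (by omega)
      exact ⟨j, Finset.mem_union_left _ hj, hor⟩
  have hinj : Set.InjOn (fun x : (_ : Finset (Fin n)) × Finset (Fin n) => maxIn c x.1 ∪ x.2)
      (G.sigma (fun I => Finset.powersetCard (k - (maxIn c I).card) (I \ maxIn c I))) := by
    rintro ⟨I, T⟩ hx ⟨I', T'⟩ hy hxy
    have hx' := Finset.mem_coe.mp hx
    have hy' := Finset.mem_coe.mp hy
    simp only at hxy
    have hI : I = I' := by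
      have h1 := hdown ⟨I, T⟩ hx'
      have h2 := hdown ⟨I', T'⟩ hy'
      simp only at h1 h2
      rw [← h1, ← h2, hxy]
    subst hI
    have hget : ∀ (T₀ : Finset (Fin n)),
        T₀ ∈ Finset.powersetCard (k - (maxIn c I).card) (I \ maxIn c I) →
        (maxIn c I ∪ T₀) \ maxIn c I = T₀ := by
      intro T₀ hT₀
      rw [Finset.mem_powersetCard] at hT₀
      have hdisj : Disjoint (maxIn c I) T₀ := by
        rw [Finset.disjoint_left]
        intro a ha haT
        exact (Finset.mem_sdiff.mp (hT₀.1 haT)).2 ha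
      rw [Finset.union_sdiff_cancel_left hdisj]
    have hT : T = T' := by
      have hxT := (Finset.mem_sigma.mp hx').2
      have hyT := (Finset.mem_sigma.mp hy').2
      rw [← hget T hxT, ← hget T' hyT, hxy]
    subst hT
    rfl
  calc (G.sigma (fun I => Finset.powersetCard (k - (maxIn c I).card) (I \ maxIn c I))).card
      ≤ (Finset.powersetCard k (Finset.univ : Finset (Fin n))).card :=
        Finset.card_le_card_of_injOn _ hmaps hinj
    _ = n.choose k := by
        rw [Finset.card_powersetCard, Finset.card_univ, Fintype.card_fin]
end QBound
section Final
variable {k : ℕ} {z : ℂ} {t : ℕ → ℂ}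

lemma Qval_le {n : ℕ} {c : Fin n → Fin n → Prop} (hk : 2 ≤ k) (ht0 : t 0 = 1)
    (htk : t k = z) (ht : ∀ j : ℕ, 1 ≤ j → j ≠ k → t j = 0) (hc : IsNode c) :
    Qval t c ≤ 1 + (n.choose k : ℝ) * ‖z‖ := by
  classical
  unfold Qval
  have h0 : (∅ : Finset (Fin n)) ∈ Finset.univ.filter (fun I : Finset (Fin n) => isIdeal c I) := by
    simp only [Finset.mem_filter, Finset.mem_univ, true_and]
    intro j hj
    exact absurd hj (Finset.notMem_empty j)
  rw [← Finset.add_sum_erase _ _ h0]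
  have hf0 : ‖lam t (∅ : Finset (Fin n)).card (maxIn c ∅).card‖ = 1 := by
    have hm : maxIn c (∅ : Finset (Fin n)) = ∅ := Finset.filter_empty _
    rw [hm]
    simp only [Finset.card_empty]
    have : lam t 0 0 = 1 := by
      unfold lam
      rw [Finset.Icc_self, Finset.sum_singleton, ht0]
      simp
    rw [this, norm_one]
  rw [hf0]
  have hrest : ∑ I ∈ (Finset.univ.filter (fun I : Finset (Fin n) => isIdeal c I)).erase ∅,
      ‖lam t I.card (maxIn c I).card‖ ≤ (n.choose k : ℝ) * ‖z‖ := by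
    have hstep : ∀ I ∈ (Finset.univ.filter (fun I : Finset (Fin n) => isIdeal c I)).erase ∅,
        ‖lam t I.card (maxIn c I).card‖
          = if (maxIn c I).card ≤ k ∧ k ≤ I.card
            then (((I.card - (maxIn c I).card).choose (k - (maxIn c I).card) : ℕ) : ℝ)
              * ‖z‖
            else 0 := by
      intro I hI
      have hne : I ≠ ∅ := (Finset.mem_erase.mp hI).1
      have hm1 : 1 ≤ (maxIn c I).card :=
        Finset.card_pos.mpr (maxIn_nonempty hc (Finset.nonempty_iff_ne_empty.mpr hne))
      rw [lam_pos hk htk ht I.card (maxIn c I).card hm1]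
      split_ifs with h
      · rw [norm_mul, Complex.norm_natCast]
      · rw [norm_zero]
    rw [Finset.sum_congr rfl hstep, ← Finset.sum_filter]
    set G := ((Finset.univ.filter (fun I : Finset (Fin n) => isIdeal c I)).erase ∅).filter
      (fun I => (maxIn c I).card ≤ k ∧ k ≤ I.card) with hGdef
    have hG : ∀ I ∈ G, isIdeal c I ∧ I.Nonempty ∧ (maxIn c I).card ≤ k ∧ k ≤ I.card := by
      intro I hI
      simp only [hGdef, Finset.mem_filter, Finset.mem_erase, Finset.mem_univ, true_and] at hI
      exact ⟨hI.1.2, Finset.nonempty_iff_ne_empty.mpr hI.1.1, hI.2.1, hI.2.2⟩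
    calc ∑ I ∈ G, (((I.card - (maxIn c I).card).choose (k - (maxIn c I).card) : ℕ) : ℝ)
          * ‖z‖
        = ((∑ I ∈ G, (I.card - (maxIn c I).card).choose (k - (maxIn c I).card) : ℕ) : ℝ)
          * ‖z‖ := by
          rw [← Finset.sum_mul]
          norm_num
      _ ≤ (n.choose k : ℝ) * ‖z‖ := by
          apply mul_le_mul_of_nonneg_right _ (norm_nonneg _)
          exact_mod_cast natkey hc G hG
  linarith

lemma one_add_zetaA_eq (hk : 2 ≤ k) (ht0 : t 0 = 1) (htk : t k = z)
    (ht : ∀ j : ℕ, 1 ≤ j → j ≠ k → t j = 0) (n : ℕ) :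
    1 + zetaA t n = (1 + (n.choose k : ℝ) * ‖z‖) /
      ‖1 + (n.choose k : ℂ) * z‖ := by
  rw [zetaA_eq hk ht0 htk ht]
  ring

lemma Tn_le (hk : 2 ≤ k) (ht0 : t 0 = 1) (htk : t k = z)
    (ht : ∀ j : ℕ, 1 ≤ j → j ≠ k → t j = 0)
    (hne : ∀ n : ℕ, 1 + (n.choose k : ℂ) * z ≠ 0) :
    ∀ N : ℕ, 1 ≤ N → Tn t N ≤ ∏ m ∈ Finset.Ico 1 N, (1 + zetaA t m) := by
  intro N
  induction N with
  | zero => omega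
  | succ N ihN =>
      intro _
      by_cases h1 : N = 0
      · subst h1
        simp [Tn_one]
      · have hN1 : 1 ≤ N := by omega
        have ih := ihN hN1
        rw [T_succ hN1]
        have hd := den_pos (z := z) hne N
        have hlam : ‖lam t N 0‖ = ‖1 + (N.choose k : ℂ) * z‖ := by
          rw [lam_zero hk ht0 htk ht]
        have hQd : ∀ c : {c : Fin N → Fin N → Prop // IsNode c},
            Qval t c.1 / ‖lam t N 0‖ ≤ 1 + zetaA t N := by
          intro c
          rw [hlam, div_le_iff₀ hd, one_add_zetaA_eq hk ht0 htk ht,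
            div_mul_cancel₀ _ (ne_of_gt hd)]
          exact Qval_le hk ht0 htk ht c.2
        calc ∑ c : {c : Fin N → Fin N → Prop // IsNode c},
              ‖amp t c.1‖ * (Qval t c.1 / ‖lam t N 0‖)
            ≤ ∑ c : {c : Fin N → Fin N → Prop // IsNode c},
              ‖amp t c.1‖ * (1 + zetaA t N) := by
              apply Finset.sum_le_sum
              intro c _
              exact mul_le_mul_of_nonneg_left (hQd c) (norm_nonneg _)
          _ = Tn t N * (1 + zetaA t N) := by rw [← Finset.sum_mul]; rfl
          _ ≤ (∏ m ∈ Finset.Ico 1 N, (1 + zetaA t m)) * (1 + zetaA t N) := by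
              apply mul_le_mul_of_nonneg_right ih
              have := zetaA_nonneg hk ht0 htk ht hne N
              linarith
          _ = ∏ m ∈ Finset.Ico 1 (N+1), (1 + zetaA t m) := by
              rw [Finset.prod_Ico_succ_top hN1]

lemma prod_le_exp (hk : 2 ≤ k) (hz : z ≠ 0) (ht0 : t 0 = 1) (htk : t k = z)
    (ht : ∀ j : ℕ, 1 ≤ j → j ≠ k → t j = 0)
    (hne : ∀ n : ℕ, 1 + (n.choose k : ℂ) * z ≠ 0) (N : ℕ) :
    ∏ m ∈ Finset.Ico 1 N, (1 + zetaA t m) ≤ Real.exp (∑' n, zetaA t n) := by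
  have hsum := summable_zetaA hk hz ht0 htk ht hne
  calc ∏ m ∈ Finset.Ico 1 N, (1 + zetaA t m)
      ≤ ∏ m ∈ Finset.Ico 1 N, Real.exp (zetaA t m) := by
        apply Finset.prod_le_prod
        · intro m _
          have := zetaA_nonneg hk ht0 htk ht hne m
          linarith
        · intro m _
          rw [add_comm]
          exact Real.add_one_le_exp _
    _ = Real.exp (∑ m ∈ Finset.Ico 1 N, zetaA t m) := (Real.exp_sum _ _).symm
    _ ≤ Real.exp (∑' n, zetaA t n) := by
        apply Real.exp_le_exp.mpr
        exact Summable.sum_le_tsum _ (fun i _ => zetaA_nonneg hk ht0 htk ht hne i) hsum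

end Final
/-- single coupling t_k = z with k ≥ 2: ζ_n^a has the stated closed form
and Σ_{n≥1} ζ_n^a converges, hence the associated ℂSG measure is of bounded variation. -/
theorem statement_11 (k : ℕ) (hk : 2 ≤ k) (z : ℂ) (hz : z ≠ 0)
    (t : ℕ → ℂ) (ht0 : t 0 = 1) (htk : t k = z)
    (ht : ∀ j : ℕ, 1 ≤ j → j ≠ k → t j = 0)
    (hne : ∀ n : ℕ, 1 + (n.choose k : ℂ) * z ≠ 0) :
    (∀ n : ℕ, zetaA t n =
        (1 + (n.choose k : ℝ) * ‖z‖) /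
          ‖1 + (n.choose k : ℂ) * z‖ - 1) ∧
    (∃ L : ℝ, Filter.Tendsto (fun N => ∑ n ∈ Finset.Ico 1 N, zetaA t n)
        Filter.atTop (nhds L)) ∧
    (∀ μ : Set Omega → ℂ, IsCSG t μ → BoundedVariation μ) := by
  refine ⟨fun n => zetaA_eq hk ht0 htk ht n, ?_, ?_⟩
  · have hs := summable_zetaA hk hz ht0 htk ht hne
    refine ⟨∑' n, zetaA t n, ?_⟩
    have h1 := hs.hasSum.tendsto_sum_nat
    have h0 : zetaA t 0 = 0 := by
      rw [zetaA_eq hk ht0 htk ht 0]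
      have hc0 : Nat.choose 0 k = 0 := Nat.choose_eq_zero_of_lt (by omega)
      simp [hc0]
    have heq : (fun N => ∑ n ∈ Finset.Ico 1 N, zetaA t n)
        = fun N => ∑ n ∈ Finset.range N, zetaA t n := by
      funext N
      apply Finset.sum_subset
      · intro x hx
        rw [Finset.mem_Ico] at hx
        rw [Finset.mem_range]
        omega
      · intro x hx hnx
        rw [Finset.mem_range] at hx
        rw [Finset.mem_Ico] at hnx
        have hx0 : x = 0 := by omega
        rw [hx0]
        exact h0
    rw [heq]
    exact h1
  · intro μ hμ
    refine ⟨Real.exp (∑' n, zetaA t n), ?_⟩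
    intro π hπ
    apply partition_bound hμ _ _ π hπ
    intro N hN
    rw [Svar_eq_Tn hμ hN]
    exact le_trans (Tn_le hk ht0 htk ht hne N hN) (prod_le_exp hk hz ht0 htk ht hne N)

end
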